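/- arXiv:1707.06270 — 2 statements merged into one kernel-verified Lean document; each statement's English description precedes it below -/
import Mathlib

section
/- Let G be a finite group and σ ∈ S_n a permutation that is a product of k ≥ 1 disjoint cycles of lengths ℓ_1,...,ℓ_k ≥ 2 together with f = n - (ℓ_1 + ... + ℓ_k) fixed points. Then the number of homomorphisms Φ: K_n → G with Φ ∘ σ* = Φ equals |ord_d(G)| · |G|^(k + f - 1) if f = 0 where d = gcd(ℓ_1,...,ℓ_k), and equals |G|^(k + f - 1) if f ≥ 1. -/
/-- A homomorphism from the complete directed graph `K_n` to `G`. -/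
def KHom {n : ℕ} {G : Type*} [Group G] (Φ : Fin n × Fin n → G) : Prop :=
  ∀ a b c : Fin n, Φ (a, b) * Φ (b, c) = Φ (a, c)

namespace Stmt7Aux

open Equiv Equiv.Perm

variable {n : ℕ} (σ : Equiv.Perm (Fin n))

/-- The same-cycle setoid. -/
def sc : Setoid (Fin n) :=
  ⟨σ.SameCycle, ⟨fun x => Equiv.Perm.SameCycle.refl σ x, fun h => h.symm,
    fun h h' => h.trans h'⟩⟩

/-- The period of a point: 1 for fixed points, the cycle length otherwise. -/
def per (a : Fin n) : ℕ :=
  if σ a = a then 1 else (σ.cycleOf a).support.card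

lemma per_key (a : Fin n) (j : ℕ) : (σ ^ j) a = a ↔ per σ a ∣ j := by
  unfold per
  split_ifs with h
  · simp [Equiv.Perm.pow_apply_eq_self_of_apply_eq_self h]
  · exact (σ.isCycleOn_support_cycleOf a).pow_apply_eq
      ((Equiv.Perm.mem_support_cycleOf_iff' h).2 (Equiv.Perm.SameCycle.refl σ a))

variable {G : Type*} [Group G]

lemma g_pow {g : Fin n → G} {h : G} (hp : ∀ a, g (σ a) = g a * h) :
    ∀ (j : ℕ) (a : Fin n), g ((σ ^ j) a) = g a * h ^ j := by
  intro j
  induction j with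
  | zero => simp
  | succ j ih =>
      intro a
      have e : (σ ^ (j + 1)) a = (σ ^ j) (σ a) := by
        rw [pow_succ, Equiv.Perm.mul_apply]
      rw [e, ih (σ a), hp a, pow_succ']
      group

lemma pow_eq_pow {h : G} (hH : ∀ a : Fin n, h ^ per σ a = 1) {x : Fin n} :
    ∀ {i j : ℕ}, (σ ^ i) x = (σ ^ j) x → h ^ i = h ^ j := by
  have aux : ∀ i j : ℕ, j ≤ i → (σ ^ i) x = (σ ^ j) x → h ^ i = h ^ j := by
    intro i j hji hij
    obtain ⟨m, rfl⟩ := Nat.exists_eq_add_of_le hji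
    have h1 : (σ ^ j) ((σ ^ m) x) = (σ ^ j) x := by
      rw [← Equiv.Perm.mul_apply, ← pow_add]
      simpa [Nat.add_comm] using hij
    have h2 : (σ ^ m) x = x := (σ ^ j).injective h1
    obtain ⟨q, rfl⟩ := (per_key σ x m).1 h2
    rw [pow_add, pow_mul, hH x, one_pow, mul_one]
  intro i j hij
  rcases le_total j i with hle | hle
  · exact aux i j hle hij
  · exact (aux j i hle hij.symm).symm

lemma sameCycle_out (a : Fin n) :
    σ.SameCycle (Quotient.mk (sc σ) a).out a :=
  @Quotient.exact _ (sc σ) _ _ (Quotient.out_eq _)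

/-- Exponent to reach `a` from the chosen representative of its cycle class. -/
noncomputable def jexp (a : Fin n) : ℕ :=
  (sameCycle_out σ a).exists_pow_eq'.choose

lemma jexp_spec (a : Fin n) :
    (σ ^ jexp σ a) ((Quotient.mk (sc σ) a).out) = a :=
  (sameCycle_out σ a).exists_pow_eq'.choose_spec.2

section Counting

variable [Fintype G]

/-- First counting step: pairs `(g,h)` with `g∘σ = g·h` are `|G|` copies of the
homomorphism count. -/
lemma cardT (x₀ : Fin n) :
    Nat.card {p : (Fin n → G) × G // ∀ a, p.1 (σ a) = p.1 a * p.2} =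
      Nat.card {Φ : Fin n × Fin n → G //
        KHom Φ ∧ ∀ a b : Fin n, Φ (σ a, σ b) = Φ (a, b)} * Fintype.card G := by
  have key : {p : (Fin n → G) × G // ∀ a, p.1 (σ a) = p.1 a * p.2} ≃
      {Φ : Fin n × Fin n → G //
        KHom Φ ∧ ∀ a b : Fin n, Φ (σ a, σ b) = Φ (a, b)} × G := by
    refine
      { toFun := fun p =>
          (⟨fun ab => p.1.1 ab.1 * (p.1.1 ab.2)⁻¹, ?_, ?_⟩, p.1.1 x₀)
        invFun := fun q =>
          ⟨(fun a => q.1.1 (a, x₀) * q.2,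
            q.2⁻¹ * q.1.1 (σ x₀, x₀) * q.2), ?_⟩
        left_inv := ?_
        right_inv := ?_ }
    · intro a b c
      show p.1.1 a * (p.1.1 b)⁻¹ * (p.1.1 b * (p.1.1 c)⁻¹) =
        p.1.1 a * (p.1.1 c)⁻¹
      group
    · intro a b
      have hp : ∀ a, p.1.1 (σ a) = p.1.1 a * p.1.2 := p.2
      show p.1.1 (σ a) * (p.1.1 (σ b))⁻¹ = p.1.1 a * (p.1.1 b)⁻¹
      rw [hp a, hp b]
      group
    · intro a
      have hΦ : KHom q.1.1 := q.1.2.1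
      have hinv := q.1.2.2
      show q.1.1 (σ a, x₀) * q.2 =
        q.1.1 (a, x₀) * q.2 * (q.2⁻¹ * q.1.1 (σ x₀, x₀) * q.2)
      have h1 : q.1.1 (σ a, x₀) = q.1.1 (a, x₀) * q.1.1 (σ x₀, x₀) := by
        rw [← hΦ (σ a) (σ x₀) x₀, hinv]
      rw [h1]
      group
    · rintro ⟨⟨g, h⟩, hp⟩
      have hp' : ∀ a, g (σ a) = g a * h := hp
      apply Subtype.ext
      apply Prod.ext
      · funext a
        show g a * (g x₀)⁻¹ * g x₀ = g a
        group
      · show (g x₀)⁻¹ * (g (σ x₀) * (g x₀)⁻¹) * g x₀ = h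
        rw [hp' x₀]
        group
    · rintro ⟨⟨Φ, hΦ, hinv⟩, c⟩
      have hdiag : ∀ a : Fin n, Φ (a, a) = 1 := fun a =>
        (mul_eq_left).1 (hΦ a a a)
      have hswap : ∀ a b : Fin n, Φ (b, a) = (Φ (a, b))⁻¹ := by
        intro a b
        have h1 : Φ (a, b) * Φ (b, a) = 1 := by
          rw [hΦ a b a]; exact hdiag a
        exact eq_inv_of_mul_eq_one_right h1
      apply Prod.ext
      · apply Subtype.ext
        funext ab
        show Φ (ab.1, x₀) * c * (Φ (ab.2, x₀) * c)⁻¹ = Φ ab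
        calc Φ (ab.1, x₀) * c * (Φ (ab.2, x₀) * c)⁻¹
            = Φ (ab.1, x₀) * (Φ (ab.2, x₀))⁻¹ := by group
          _ = Φ (ab.1, x₀) * Φ (x₀, ab.2) := by rw [← hswap]
          _ = Φ ab := hΦ ab.1 x₀ ab.2
      · show Φ (x₀, x₀) * c = c
        rw [hdiag, one_mul]
  rw [Nat.card_congr key, Nat.card_prod, Nat.card_eq_fintype_card (α := G)]

/-- Second counting step: pairs `(g,h)` are parametrized by admissible `h`
together with a free choice on each cycle class. -/
lemma cardS :
    Nat.card {p : (Fin n → G) × G // ∀ a, p.1 (σ a) = p.1 a * p.2} =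
      Nat.card {h : G // ∀ a : Fin n, h ^ per σ a = 1} *
        Fintype.card G ^ Nat.card (Quotient (sc σ)) := by
  have key : {p : (Fin n → G) × G // ∀ a, p.1 (σ a) = p.1 a * p.2} ≃
      {h : G // ∀ a : Fin n, h ^ per σ a = 1} × (Quotient (sc σ) → G) := by
    refine
      { toFun := fun p => (⟨p.1.2, ?_⟩, fun q => p.1.1 q.out)
        invFun := fun z =>
          ⟨(fun a => z.2 (Quotient.mk (sc σ) a) * z.1.1 ^ jexp σ a, z.1.1), ?_⟩
        left_inv := ?_
        right_inv := ?_ }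
    · -- h ^ per σ a = 1
      intro a
      have hp : ∀ b, p.1.1 (σ b) = p.1.1 b * p.1.2 := p.2
      have h1 := g_pow σ hp (per σ a) a
      have h2 : (σ ^ per σ a) a = a := (per_key σ a _).2 dvd_rfl
      rw [h2] at h1
      exact (mul_eq_left).1 h1.symm
    · -- the constructed pair satisfies the relation
      intro a
      have hH : ∀ b : Fin n, z.1.1 ^ per σ b = 1 := z.1.2
      show z.2 (Quotient.mk (sc σ) (σ a)) * z.1.1 ^ jexp σ (σ a) =
        z.2 (Quotient.mk (sc σ) a) * z.1.1 ^ jexp σ a * z.1.1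
      have hq : Quotient.mk (sc σ) (σ a) = Quotient.mk (sc σ) a :=
        Quotient.sound (Setoid.symm' (sc σ)
          (show σ.SameCycle a (σ a) from ⟨1, rfl⟩))
      rw [hq]
      have hexp : z.1.1 ^ jexp σ (σ a) = z.1.1 ^ (jexp σ a + 1) := by
        apply pow_eq_pow σ hH
        have e1 : (σ ^ jexp σ (σ a)) ((Quotient.mk (sc σ) (σ a)).out) = σ a :=
          jexp_spec σ (σ a)
        rw [hq] at e1
        rw [e1]
        have e2 : (σ ^ (jexp σ a + 1)) ((Quotient.mk (sc σ) a).out) =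
            σ ((σ ^ jexp σ a) ((Quotient.mk (sc σ) a).out)) := by
          rw [pow_succ', Equiv.Perm.mul_apply]
        rw [e2, jexp_spec σ a]
      rw [hexp, pow_succ, mul_assoc]
    · rintro ⟨⟨g, h⟩, hp⟩
      have hp' : ∀ a, g (σ a) = g a * h := hp
      apply Subtype.ext
      apply Prod.ext
      · funext a
        show g ((Quotient.mk (sc σ) a).out) * h ^ jexp σ a = g a
        rw [← g_pow σ hp' (jexp σ a) ((Quotient.mk (sc σ) a).out), jexp_spec σ a]
      · rfl
    · rintro ⟨⟨h, hH⟩, u⟩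
      apply Prod.ext
      · apply Subtype.ext; rfl
      · funext q
        show u (Quotient.mk (sc σ) q.out) * h ^ jexp σ q.out = u q
        have hq : Quotient.mk (sc σ) q.out = q := Quotient.out_eq q
        rw [hq]
        have hz : h ^ jexp σ q.out = h ^ (0 : ℕ) := by
          apply pow_eq_pow σ hH
          have e := jexp_spec σ q.out
          rw [hq] at e
          simpa using e
        rw [hz, pow_zero, mul_one]
  rw [Nat.card_congr key, Nat.card_prod, Nat.card_fun, Nat.card_eq_fintype_card (α := G)]

end Counting

/-- The classifying map of a point: its cycle factor, or itself if fixed. -/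
def pt (a : Fin n) : {c // c ∈ σ.cycleFactorsFinset} ⊕ {x : Fin n // σ x = x} :=
  if h : σ a = a then Sum.inr ⟨a, h⟩
  else Sum.inl ⟨σ.cycleOf a,
    Equiv.Perm.cycleOf_mem_cycleFactorsFinset_iff.2 (Equiv.Perm.mem_support.2 h)⟩

lemma pt_wd {a b : Fin n} (hab : σ.SameCycle a b) : pt σ a = pt σ b := by
  unfold pt
  by_cases ha : σ a = a
  · obtain ⟨i, hi⟩ := hab
    have hba : b = a := by
      rw [← hi, Equiv.Perm.zpow_apply_eq_self_of_apply_eq_self ha]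
    subst hba
    rfl
  · have hb : ¬ σ b = b := by
      intro hb
      obtain ⟨i, hi⟩ := hab.symm
      have hab' : a = b := by
        rw [← hi, Equiv.Perm.zpow_apply_eq_self_of_apply_eq_self hb]
      exact ha (hab' ▸ hb)
    rw [dif_neg ha, dif_neg hb]
    exact congrArg Sum.inl (Subtype.ext hab.cycleOf_eq)

lemma pt_inj {a b : Fin n} (hab : pt σ a = pt σ b) : σ.SameCycle a b := by
  unfold pt at hab
  by_cases ha : σ a = a <;> by_cases hb : σ b = b
  · rw [dif_pos ha, dif_pos hb] at hab
    have : a = b := by simpa using hab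
    exact this ▸ Equiv.Perm.SameCycle.refl σ a
  · rw [dif_pos ha, dif_neg hb] at hab
    exact absurd hab (by simp)
  · rw [dif_neg ha, dif_pos hb] at hab
    exact absurd hab (by simp)
  · rw [dif_neg ha, dif_neg hb] at hab
    have hcyc : σ.cycleOf a = σ.cycleOf b := by
      have := Sum.inl.inj hab
      exact Subtype.ext_iff.1 this
    have hbmem : b ∈ (σ.cycleOf b).support :=
      (Equiv.Perm.mem_support_cycleOf_iff' hb).2 (Equiv.Perm.SameCycle.refl σ b)
    rw [← hcyc] at hbmem
    exact (Equiv.Perm.mem_support_cycleOf_iff' ha).1 hbmem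

lemma pt_surj :
    Function.Surjective (pt σ) := by
  rintro (⟨c, hc⟩ | ⟨a, ha⟩)
  · have hc' := Equiv.Perm.mem_cycleFactorsFinset_iff.1 hc
    obtain ⟨a, ha1, -⟩ := hc'.1
    have hasup : a ∈ c.support := Equiv.Perm.mem_support.2 ha1
    have hσa : ¬ σ a = a := by
      have := hc'.2 a hasup
      rw [← this]; exact ha1
    refine ⟨a, ?_⟩
    unfold pt
    rw [dif_neg hσa]
    exact congrArg Sum.inl
      (Subtype.ext (Equiv.Perm.cycle_is_cycleOf hasup hc).symm)
  · exact ⟨a, by unfold pt; rw [dif_pos ha]⟩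

/-- The number of cycle classes is `k + f`. -/
lemma cardQ :
    Nat.card (Quotient (sc σ)) = σ.cycleType.card + (n - σ.cycleType.sum) := by
  classical
  set F : Quotient (sc σ) →
      {c // c ∈ σ.cycleFactorsFinset} ⊕ {x : Fin n // σ x = x} :=
    Quotient.lift (pt σ) (fun _ _ h => pt_wd σ h) with hF
  have hbij : Function.Bijective F := by
    constructor
    · rintro ⟨a⟩ ⟨b⟩ hab
      exact Quotient.sound (pt_inj σ (by exact hab))
    · intro z
      obtain ⟨a, ha⟩ := pt_surj σ z
      exact ⟨Quotient.mk (sc σ) a, ha⟩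
  rw [Nat.card_eq_of_bijective F hbij, Nat.card_sum]
  congr 1
  · rw [Nat.card_eq_finsetCard, Equiv.Perm.cycleType_def, Multiset.card_map]
    rfl
  · have e : Nat.card {x : Fin n // σ x = x} =
        Fintype.card (Function.fixedPoints σ) := by
      rw [Nat.card_eq_fintype_card]
      rfl
    rw [e, Equiv.Perm.card_fixedPoints, Fintype.card_fin]

end Stmt7Aux

/-- if `σ ∈ S_n` is a product of `k ≥ 1` disjoint cycles of lengths
`ℓ_1,...,ℓ_k ≥ 2` (recorded by `σ.cycleType`) together with `f = n - Σℓ_i` fixed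
points, then the number of homomorphisms `K_n → G` fixed by `σ` is
`|ord_d(G)|·|G|^(k+f-1)` when `f = 0` (where `d = gcd(ℓ_1,...,ℓ_k)`) and
`|G|^(k+f-1)` when `f ≥ 1`. -/
theorem stmt7 {G : Type*} [Group G] [Fintype G] (n : ℕ)
    (σ : Equiv.Perm (Fin n)) (hk : 1 ≤ σ.cycleType.card) :
    Nat.card {Φ : Fin n × Fin n → G //
        KHom Φ ∧ ∀ a b : Fin n, Φ (σ a, σ b) = Φ (a, b)} =
      if n - σ.cycleType.sum = 0 then
        Nat.card {g : G // g ^ σ.cycleType.gcd = 1} *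
          Fintype.card G ^ (σ.cycleType.card + (n - σ.cycleType.sum) - 1)
      else
        Fintype.card G ^ (σ.cycleType.card + (n - σ.cycleType.sum) - 1) := by
  classical
  obtain ⟨a₀, ha₀⟩ : ∃ a, σ a ≠ a := by
    by_contra hno
    push_neg at hno
    have hσ1 : σ = 1 := Equiv.ext fun a => hno a
    rw [hσ1, Equiv.Perm.cycleType_one] at hk
    simp at hk
  have key := (Stmt7Aux.cardT σ (G := G) a₀).symm.trans (Stmt7Aux.cardS σ (G := G))
  rw [Stmt7Aux.cardQ σ] at key
  have hGpos : 0 < Fintype.card G := Fintype.card_pos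
  have hK : 1 ≤ σ.cycleType.card + (n - σ.cycleType.sum) :=
    le_trans hk (Nat.le_add_right _ _)
  have hpow : Fintype.card G ^ (σ.cycleType.card + (n - σ.cycleType.sum)) =
      Fintype.card G ^ (σ.cycleType.card + (n - σ.cycleType.sum) - 1) *
        Fintype.card G := by
    rw [← pow_succ]
    congr 1
    exact (Nat.succ_pred_eq_of_pos hK).symm
  rw [hpow] at key
  by_cases hf : n - σ.cycleType.sum = 0
  · rw [if_pos hf]
    -- no fixed points
    have hsupp : σ.support = Finset.univ := by
      apply Finset.eq_univ_of_card
      have h1 : σ.support.card ≤ n := by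
        simpa using Finset.card_le_univ σ.support
      have h2 : n ≤ σ.support.card := by
        rw [← Equiv.Perm.sum_cycleType]
        exact Nat.sub_eq_zero_iff_le.mp hf
      rw [Fintype.card_fin]
      exact le_antisymm h1 h2
    have hnofix : ∀ a : Fin n, σ a ≠ a := fun a =>
      Equiv.Perm.mem_support.1 (hsupp ▸ Finset.mem_univ a)
    have hH : Nat.card {h : G // ∀ a : Fin n, h ^ Stmt7Aux.per σ a = 1} =
        Nat.card {g : G // g ^ σ.cycleType.gcd = 1} := by
      refine Nat.card_congr (Equiv.subtypeEquivRight fun h => ?_)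
      constructor
      · intro hall
        rw [← orderOf_dvd_iff_pow_eq_one]
        apply Multiset.dvd_gcd.2
        intro ℓ hℓ
        rw [Equiv.Perm.cycleType_def] at hℓ
        obtain ⟨c, hcv, rfl⟩ := Multiset.mem_map.1 hℓ
        have hc : c ∈ σ.cycleFactorsFinset := hcv
        have hc' := Equiv.Perm.mem_cycleFactorsFinset_iff.1 hc
        obtain ⟨a, ha1, -⟩ := hc'.1
        have hasup : a ∈ c.support := Equiv.Perm.mem_support.2 ha1
        have hσa : ¬ σ a = a := by
          have := hc'.2 a hasup
          rw [← this]; exact ha1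
        have hcyc : c = σ.cycleOf a := Equiv.Perm.cycle_is_cycleOf hasup hc
        have hper := hall a
        rw [Stmt7Aux.per, if_neg hσa, ← hcyc] at hper
        rw [orderOf_dvd_iff_pow_eq_one]
        exact hper
      · intro hgcd a
        rw [Stmt7Aux.per, if_neg (hnofix a)]
        have hmem : (σ.cycleOf a).support.card ∈ σ.cycleType := by
          rw [Equiv.Perm.cycleType_def]
          exact Multiset.mem_map_of_mem _
            (Finset.mem_def.1
              (Equiv.Perm.cycleOf_mem_cycleFactorsFinset_iff.2
                (Equiv.Perm.mem_support.2 (hnofix a))))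
        obtain ⟨q, hq⟩ := Multiset.gcd_dvd hmem
        rw [hq, pow_mul, hgcd, one_pow]
    rw [hH, ← mul_assoc] at key
    exact Nat.eq_of_mul_eq_mul_right hGpos key
  · rw [if_neg hf]
    -- there is a fixed point
    obtain ⟨a₁, ha₁⟩ : ∃ a : Fin n, σ a = a := by
      by_contra hno
      push_neg at hno
      have hsupp : σ.support = Finset.univ :=
        Finset.eq_univ_iff_forall.2 fun a => Equiv.Perm.mem_support.2 (hno a)
      have : σ.cycleType.sum = n := by
        rw [Equiv.Perm.sum_cycleType, hsupp]
        simp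
      exact hf (by rw [this]; exact Nat.sub_self n)
    have hH : Nat.card {h : G // ∀ a : Fin n, h ^ Stmt7Aux.per σ a = 1} = 1 := by
      rw [Nat.card_eq_one_iff_unique]
      constructor
      · constructor
        intro x y
        apply Subtype.ext
        have hx := x.2 a₁
        have hy := y.2 a₁
        rw [Stmt7Aux.per, if_pos ha₁, pow_one] at hx hy
        rw [hx, hy]
      · exact ⟨1, fun a => one_pow _⟩
    rw [hH, one_mul] at key
    exact Nat.eq_of_mul_eq_mul_right hGpos key
end

section
/- For a finite group G and a prime p, |{g ∈ G : g^p = 1}| ≡ |G|^(p-1) (mod p). -/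
open Equiv Equiv.Perm MulAction

/-- for a finite group `G` and a prime `p`,
`|{g ∈ G : g^p = 1}| ≡ |G|^(p-1) (mod p)`. -/
theorem stmt12 {G : Type*} [Group G] [Fintype G] (p : ℕ) (hp : p.Prime) :
    Nat.card {g : G // g ^ p = 1} ≡ Fintype.card G ^ (p - 1) [MOD p] := by
  have hfact : Fact p.Prime := ⟨hp⟩
  let f : ℕ → vectorsProdEqOne G p → vectorsProdEqOne G p := fun k v =>
    VectorsProdEqOne.rotate v k
  have hf1 : ∀ v, f 0 v = v := VectorsProdEqOne.rotate_zero
  have hf2 : ∀ j k v, f k (f j v) = f (j + k) v := fun j k v =>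
    VectorsProdEqOne.rotate_rotate v j k
  have hf3 : ∀ v, f p v = v := VectorsProdEqOne.rotate_length
  let σ : Equiv.Perm (vectorsProdEqOne G p) :=
    Equiv.mk (f 1) (f (p - 1)) (fun s => by rw [hf2, add_tsub_cancel_of_le hp.one_lt.le, hf3])
      fun s => by rw [hf2, tsub_add_cancel_of_le hp.one_lt.le, hf3]
  have hσ : ∀ k v, (σ ^ k) v = f k v := fun k =>
    Nat.rec (fun v => (hf1 v).symm) (fun k hk v => by
      rw [pow_succ, Perm.mul_apply, hk (σ v), Nat.succ_eq_one_add, ← hf2 1 k]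
      simp only [σ, coe_fn_mk]) k
  have hσp : σ ^ p = 1 := Perm.ext fun v => by rw [hσ, hf3, Perm.one_apply]
  set H := Subgroup.zpowers σ with hHdef
  have hHp : IsPGroup p H := by
    intro h
    refine ⟨1, ?_⟩
    rw [pow_one]
    obtain ⟨n, hn⟩ := h.2
    have hn' : σ ^ n = (h : Equiv.Perm (vectorsProdEqOne G p)) := hn
    apply Subtype.ext
    rw [Subgroup.coe_pow, OneMemClass.coe_one, ← hn', ← zpow_natCast, ← zpow_mul, mul_comm,
      zpow_mul, zpow_natCast, hσp, one_zpow]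
  have key := hHp.card_modEq_card_fixedPoints (vectorsProdEqOne G p)
  have hfixed : ∀ v : vectorsProdEqOne G p, σ v = v →
      v ∈ fixedPoints H (vectorsProdEqOne G p) := by
    intro v hv h
    obtain ⟨n, hn⟩ := h.2
    have hn' : σ ^ n = (h : Equiv.Perm (vectorsProdEqOne G p)) := hn
    show (h : Equiv.Perm (vectorsProdEqOne G p)) v = v
    rw [← hn']
    exact Equiv.Perm.zpow_apply_eq_self_of_apply_eq_self hv n
  let e : {g : G // g ^ p = 1} → fixedPoints H (vectorsProdEqOne G p) := fun g =>
    ⟨⟨⟨List.replicate p g.1, List.length_replicate⟩, by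
        show (List.replicate p g.1).prod = 1
        rw [List.prod_replicate, g.2]⟩,
      hfixed _ (Subtype.ext (Subtype.ext (List.rotate_replicate g.1 p 1)))⟩
  have hbij : Function.Bijective e := by
    constructor
    · intro a b hab
      have h1 : List.replicate p a.1 = List.replicate p b.1 :=
        congrArg (fun v : fixedPoints H (vectorsProdEqOne G p) =>
          ((v : vectorsProdEqOne G p) : List.Vector G p).1) hab
      exact Subtype.ext (List.replicate_right_injective hp.ne_zero h1)
    · rintro ⟨v, hv⟩
      have hfix : σ v = v := hv ⟨σ, Subgroup.mem_zpowers σ⟩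
      have hrot1 : v.1.1.rotate 1 = v.1.1 := Subtype.ext_iff.mp (Subtype.ext_iff.mp hfix)
      obtain ⟨g, hg⟩ := List.rotate_one_eq_self_iff_eq_replicate.mp hrot1
      have hlen : v.1.1.length = p := v.1.2
      rw [hlen] at hg
      have hgp : g ^ p = 1 := by
        have h2 : v.1.1.prod = 1 := v.2
        rw [hg, List.prod_replicate] at h2
        exact h2
      exact ⟨⟨g, hgp⟩, Subtype.ext (Subtype.ext (Subtype.ext hg.symm))⟩
  have hcard : Nat.card {g : G // g ^ p = 1} =
      Nat.card (fixedPoints H (vectorsProdEqOne G p)) := Nat.card_eq_of_bijective e hbij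
  have hcard2 : Nat.card (vectorsProdEqOne G p) = Fintype.card G ^ (p - 1) := by
    rw [Nat.card_eq_fintype_card, VectorsProdEqOne.card]
  rw [hcard, ← hcard2]
  exact key.symm
end
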